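/- For $|q|<1$ and complex $a$ with $|aq|<1$: $\sum_{n=1}^{\infty} \frac{a q^n}{1-aq^n} = (aq;q)_\infty \sum_{n=1}^{\infty} \frac{n\, a^n q^n}{(q;q)_n}$, where $(aq;q)_\infty = \prod_{j=1}^{\infty}(1-aq^j)$ and $(q;q)_n = \prod_{j=1}^{n}(1-q^j)$. -/

import Mathlib

open Filter Finset Complex Topology

noncomputable def Qp (q : ℂ) (n : ℕ) : ℂ := ∏ j ∈ Finset.range n, (1 - q ^ (j + 1))
noncomputable def Ef (q b : ℂ) : ℂ := ∑' n : ℕ, (b * q) ^ n / Qp q n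
noncomputable def Gf (q b : ℂ) : ℂ := ∑' n : ℕ, (n : ℂ) * (b * q) ^ n / Qp q n
noncomputable def Ff (q b : ℂ) : ℂ := ∑' n : ℕ, b * q ^ (n + 1) / (1 - b * q ^ (n + 1))

lemma one_sub_ne {z : ℂ} (hz : ‖z‖ < 1) : (1 : ℂ) - z ≠ 0 := by
  intro h
  rw [sub_eq_zero] at h
  simp [← h] at hz

lemma weier (s : Finset ℕ) (x : ℕ → ℝ) (h0 : ∀ j, 0 ≤ x j) (h1 : ∀ j, x j ≤ 1) :
    1 - ∑ j ∈ s, x j ≤ ∏ j ∈ s, (1 - x j) := by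
  classical
  induction s using Finset.cons_induction with
  | empty => simp
  | cons j s hj ih =>
    rw [Finset.prod_cons, Finset.sum_cons]
    have hs : 0 ≤ ∑ i ∈ s, x i := Finset.sum_nonneg fun i _ => h0 i
    nlinarith [mul_nonneg (sub_nonneg.2 (h1 j)) (sub_nonneg.2 ih), mul_nonneg (h0 j) hs]

lemma Qp_lb {q : ℂ} (hq : ‖q‖ < 1) : ∃ c : ℝ, 0 < c ∧ ∀ n, c ≤ ‖Qp q n‖ := by
  have h0q : 0 ≤ ‖q‖ := norm_nonneg q
  have hhalf : (0:ℝ) < (1 - ‖q‖) / 2 := by linarith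
  obtain ⟨N, hN⟩ : ∃ N, ‖q‖ ^ N < (1 - ‖q‖) / 2 :=
    ((tendsto_pow_atTop_nhds_zero_of_lt_one h0q hq).eventually
      (eventually_lt_nhds hhalf)).exists
  have hN1 : ‖q‖ ^ (N + 1) ≤ (1 - ‖q‖) / 2 :=
    le_trans (pow_le_pow_of_le_one h0q hq.le (by omega)) hN.le
  set x : ℕ → ℝ := fun j => ‖q‖ ^ (j + 1) with hx
  have hx0 : ∀ j, 0 ≤ x j := fun j => pow_nonneg h0q _
  have hx1 : ∀ j, x j ≤ 1 := fun j => (pow_le_one₀ h0q hq.le)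
  have hplow : ∀ n, ∏ j ∈ Finset.range n, (1 - x j) ≤ ‖Qp q n‖ := by
    intro n
    rw [Qp, norm_prod]
    refine Finset.prod_le_prod (fun j _ => by simpa using sub_nonneg.2 (hx1 j)) fun j _ => ?_
    have h1 : x j = ‖q ^ (j+1)‖ := by rw [hx, norm_pow]
    have := norm_sub_norm_le (1:ℂ) (q ^ (j+1))
    simp only [norm_one] at this
    linarith
  have hpos : ∀ n, 0 < ∏ j ∈ Finset.range n, (1 - x j) := by
    intro n
    refine Finset.prod_pos fun j _ => sub_pos.2 (lt_of_le_of_lt ?_ hq)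
    calc x j = ‖q‖ ^ (j+1) := rfl
    _ ≤ ‖q‖ ^ 1 := pow_le_pow_of_le_one h0q hq.le (by omega)
    _ = ‖q‖ := pow_one _
  refine ⟨(∏ j ∈ Finset.range N, (1 - x j)) / 2, by have := hpos N; positivity, fun n => ?_⟩
  refine le_trans ?_ (hplow n)
  have hle1 : ∀ (s : Finset ℕ), ∏ j ∈ s, (1 - x j) ≤ 1 := by
    intro s
    refine Finset.prod_le_one (fun j _ => sub_nonneg.2 (hx1 j)) fun j _ => ?_
    have := hx0 j; linarith
  rcases le_total n N with h | h
  · have hsplit : (∏ j ∈ Finset.range n, (1 - x j)) * ∏ j ∈ Finset.Ico n N, (1 - x j)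
        = ∏ j ∈ Finset.range N, (1 - x j) := Finset.prod_range_mul_prod_Ico _ h
    have h2 : ∏ j ∈ Finset.range N, (1 - x j) ≤ ∏ j ∈ Finset.range n, (1 - x j) := by
      rw [← hsplit]
      calc (∏ j ∈ Finset.range n, (1 - x j)) * ∏ j ∈ Finset.Ico n N, (1 - x j)
          ≤ (∏ j ∈ Finset.range n, (1 - x j)) * 1 :=
            mul_le_mul_of_nonneg_left (hle1 _) (hpos n).le
      _ = _ := mul_one _
    have := hpos N
    linarith
  · have hsum : ∑ j ∈ Finset.Ico N n, x j ≤ 1 / 2 := by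
      rw [Finset.sum_Ico_eq_sum_range]
      have hterm : ∀ i, x (N + i) = ‖q‖ ^ (N + 1) * ‖q‖ ^ i := by
        intro i
        rw [hx]
        simp only []
        rw [← pow_add]
        ring_nf
      calc ∑ i ∈ Finset.range (n - N), x (N + i)
          = ‖q‖ ^ (N + 1) * ∑ i ∈ Finset.range (n - N), ‖q‖ ^ i := by
            rw [Finset.mul_sum]; exact Finset.sum_congr rfl fun i _ => hterm i
        _ ≤ ‖q‖ ^ (N + 1) * (1 - ‖q‖)⁻¹ := by
            refine mul_le_mul_of_nonneg_left ?_ (pow_nonneg h0q _)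
            rw [← tsum_geometric_of_lt_one h0q hq]
            exact Summable.sum_le_tsum _ (fun i _ => pow_nonneg h0q i)
              (summable_geometric_of_lt_one h0q hq)
        _ ≤ (1 - ‖q‖) / 2 * (1 - ‖q‖)⁻¹ :=
            mul_le_mul_of_nonneg_right hN1 (by rw [inv_nonneg]; linarith)
        _ = 1 / 2 := by
            rw [div_mul_eq_mul_div, mul_inv_cancel₀ (by linarith : (1:ℝ) - ‖q‖ ≠ 0) ]
    have hIco : (1:ℝ)/2 ≤ ∏ j ∈ Finset.Ico N n, (1 - x j) := by
      refine le_trans ?_ (weier _ x hx0 hx1)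
      linarith
    have hsplit : (∏ j ∈ Finset.range N, (1 - x j)) * ∏ j ∈ Finset.Ico N n, (1 - x j)
        = ∏ j ∈ Finset.range n, (1 - x j) := Finset.prod_range_mul_prod_Ico _ h
    calc (∏ j ∈ Finset.range N, (1 - x j)) / 2
        = (∏ j ∈ Finset.range N, (1 - x j)) * (1/2) := by ring
      _ ≤ (∏ j ∈ Finset.range N, (1 - x j)) * ∏ j ∈ Finset.Ico N n, (1 - x j) :=
          mul_le_mul_of_nonneg_left hIco (hpos N).le
      _ = ∏ j ∈ Finset.range n, (1 - x j) := hsplit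

lemma Qp_ne {q : ℂ} {c : ℝ} (hc0 : 0 < c) (hc : ∀ n, c ≤ ‖Qp q n‖) (n : ℕ) : Qp q n ≠ 0 := by
  intro h
  have := hc n
  rw [h, norm_zero] at this
  linarith

section Summable

variable {q b : ℂ} {c : ℝ}

lemma sE (hc0 : 0 < c) (hc : ∀ n, c ≤ ‖Qp q n‖) (hb : ‖b * q‖ < 1) :
    Summable (fun n : ℕ => (b * q) ^ n / Qp q n) := by
  refine Summable.of_norm_bounded (g := fun n => ‖b * q‖ ^ n / c)
    ((summable_geometric_of_lt_one (norm_nonneg _) hb).div_const c) fun n => ?_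
  rw [norm_div, norm_pow]
  exact div_le_div_of_nonneg_left (pow_nonneg (norm_nonneg _) n) hc0 (hc n)

lemma sG (hc0 : 0 < c) (hc : ∀ n, c ≤ ‖Qp q n‖) (hb : ‖b * q‖ < 1) :
    Summable (fun n : ℕ => (n : ℂ) * (b * q) ^ n / Qp q n) := by
  have hmaj : Summable (fun n : ℕ => (n : ℝ) ^ 1 * ‖b * q‖ ^ n / c) := by
    refine Summable.div_const ?_ c
    exact summable_pow_mul_geometric_of_norm_lt_one 1
      (by rwa [Real.norm_of_nonneg (norm_nonneg _)])
  refine Summable.of_norm_bounded hmaj fun n => ?_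
  rw [norm_div, norm_mul, norm_pow, Complex.norm_natCast, pow_one]
  exact div_le_div_of_nonneg_left (by positivity) hc0 (hc n)

lemma sF (hb : ‖b * q‖ < 1) (hq : ‖q‖ < 1) :
    Summable (fun n : ℕ => b * q ^ (n + 1) / (1 - b * q ^ (n + 1))) := by
  have h0q : 0 ≤ ‖q‖ := norm_nonneg q
  have hnum : ∀ n : ℕ, ‖b * q ^ (n + 1)‖ = ‖b * q‖ * ‖q‖ ^ n := by
    intro n
    rw [norm_mul, norm_mul, norm_pow, pow_succ]
    ring
  have hden : ∀ n : ℕ, 1 - ‖b * q‖ ≤ ‖1 - b * q ^ (n + 1)‖ := by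
    intro n
    have h1 : ‖b * q ^ (n + 1)‖ ≤ ‖b * q‖ := by
      rw [hnum n]
      calc ‖b * q‖ * ‖q‖ ^ n ≤ ‖b * q‖ * 1 := by
            refine mul_le_mul_of_nonneg_left (pow_le_one₀ h0q hq.le) (norm_nonneg _)
      _ = ‖b * q‖ := mul_one _
    have := norm_sub_norm_le (1 : ℂ) (b * q ^ (n + 1))
    simp only [norm_one] at this
    linarith
  refine Summable.of_norm_bounded (g := fun n => (‖b * q‖ / (1 - ‖b * q‖)) * ‖q‖ ^ n)
    ((summable_geometric_of_lt_one h0q hq).mul_left _) fun n => ?_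
  rw [norm_div, hnum n]
  have h2 : ‖b * q‖ * ‖q‖ ^ n / ‖1 - b * q ^ (n + 1)‖ ≤ ‖b * q‖ * ‖q‖ ^ n / (1 - ‖b * q‖) :=
    div_le_div_of_nonneg_left (by positivity) (by linarith) (hden n)
  calc ‖b * q‖ * ‖q‖ ^ n / ‖1 - b * q ^ (n + 1)‖ ≤ ‖b * q‖ * ‖q‖ ^ n / (1 - ‖b * q‖) := h2
  _ = ‖b * q‖ / (1 - ‖b * q‖) * ‖q‖ ^ n := by ring

end Summable

section FE

variable {q b : ℂ} {c : ℝ}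

lemma hb2_of (hb : ‖b * q‖ < 1) (hq : ‖q‖ < 1) : ‖b * q * q‖ < 1 := by
  rw [norm_mul]
  calc ‖b * q‖ * ‖q‖ ≤ 1 * ‖q‖ :=
        mul_le_mul_of_nonneg_right hb.le (norm_nonneg _)
  _ = ‖q‖ := one_mul _
  _ < 1 := hq

lemma qpow_ne (hq : ‖q‖ < 1) (n : ℕ) : (1 : ℂ) - q ^ (n + 1) ≠ 0 := by
  refine one_sub_ne ?_
  rw [norm_pow]
  exact pow_lt_one₀ (norm_nonneg _) hq (by omega)

lemma Qp_succ (q : ℂ) (n : ℕ) : Qp q (n + 1) = Qp q n * (1 - q ^ (n + 1)) := by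
  rw [Qp, Qp, Finset.prod_range_succ]

lemma FE_E (hc0 : 0 < c) (hc : ∀ n, c ≤ ‖Qp q n‖) (hq : ‖q‖ < 1) (hb : ‖b * q‖ < 1) :
    Ef q (b * q) = Ef q b * (1 - b * q) := by
  have h1 := sE hc0 hc hb
  have h2 := sE hc0 hc (hb2_of hb hq)
  have key : Ef q b - Ef q (b * q) = (b * q) * Ef q b := by
    calc Ef q b - Ef q (b * q)
        = ∑' n : ℕ, ((b * q) ^ n / Qp q n - (b * q * q) ^ n / Qp q n) := (Summable.tsum_sub h1 h2).symm
      _ = ((b * q) ^ 0 / Qp q 0 - (b * q * q) ^ 0 / Qp q 0)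
          + ∑' n : ℕ, ((b * q) ^ (n+1) / Qp q (n+1) - (b * q * q) ^ (n+1) / Qp q (n+1)) :=
          Summable.tsum_eq_zero_add (h1.sub h2)
      _ = ∑' n : ℕ, (b * q) * ((b * q) ^ n / Qp q n) := by
          rw [show ((b * q) ^ 0 / Qp q 0 - (b * q * q) ^ 0 / Qp q 0) = 0 by simp, zero_add]
          refine tsum_congr fun n => ?_
          have hQn := Qp_ne hc0 hc n
          have hqn := qpow_ne hq n
          rw [Qp_succ]
          field_simp
          ring
      _ = (b * q) * Ef q b := tsum_mul_left
  linear_combination -key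

lemma FE_G (hc0 : 0 < c) (hc : ∀ n, c ≤ ‖Qp q n‖) (hq : ‖q‖ < 1) (hb : ‖b * q‖ < 1) :
    Gf q (b * q) = Gf q b * (1 - b * q) - (b * q) * Ef q b := by
  have h1 := sG hc0 hc hb
  have h2 := sG hc0 hc (hb2_of hb hq)
  have key : Gf q b - Gf q (b * q) = (b * q) * (Gf q b + Ef q b) := by
    calc Gf q b - Gf q (b * q)
        = ∑' n : ℕ, ((n : ℂ) * (b * q) ^ n / Qp q n - (n : ℂ) * (b * q * q) ^ n / Qp q n) :=
          (Summable.tsum_sub h1 h2).symm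
      _ = (((0:ℕ) : ℂ) * (b * q) ^ 0 / Qp q 0 - ((0:ℕ) : ℂ) * (b * q * q) ^ 0 / Qp q 0)
          + ∑' n : ℕ, ((((n+1) : ℕ) : ℂ) * (b * q) ^ (n+1) / Qp q (n+1)
              - (((n+1) : ℕ) : ℂ) * (b * q * q) ^ (n+1) / Qp q (n+1)) :=
          Summable.tsum_eq_zero_add (h1.sub h2)
      _ = ∑' n : ℕ, (b * q) * ((n : ℂ) * (b * q) ^ n / Qp q n + (b * q) ^ n / Qp q n) := by
          rw [show (((0:ℕ) : ℂ) * (b * q) ^ 0 / Qp q 0 - ((0:ℕ) : ℂ) * (b * q * q) ^ 0 / Qp q 0) = 0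
            by simp, zero_add]
          refine tsum_congr fun n => ?_
          have hQn := Qp_ne hc0 hc n
          have hqn := qpow_ne hq n
          rw [Qp_succ]
          push_cast
          field_simp
          ring
      _ = (b * q) * ∑' n : ℕ, ((n : ℂ) * (b * q) ^ n / Qp q n + (b * q) ^ n / Qp q n) :=
          tsum_mul_left
      _ = (b * q) * (Gf q b + Ef q b) := by
          rw [Summable.tsum_add h1 (sE hc0 hc hb)]
          rfl
  linear_combination -key

lemma FE_F (hq : ‖q‖ < 1) (hb : ‖b * q‖ < 1) :
    Ff q b = b * q / (1 - b * q) + Ff q (b * q) := by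
  rw [Ff, Summable.tsum_eq_zero_add (sF hb hq)]
  congr 1
  · norm_num
  · rw [Ff]
    refine tsum_congr fun n => ?_
    rw [show b * q ^ (n + 1 + 1) = b * q * q ^ (n + 1) by ring]

end FE

lemma norm_aq (a q : ℂ) (j : ℕ) : ‖a * q ^ (j + 1)‖ = ‖a * q‖ * ‖q‖ ^ j := by
  rw [norm_mul, norm_mul, norm_pow, pow_succ]
  ring

lemma norm_aq_le {q : ℂ} (a : ℂ) (hq : ‖q‖ < 1) (j : ℕ) : ‖a * q ^ (j + 1)‖ ≤ ‖a * q‖ := by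
  rw [norm_aq]
  calc ‖a * q‖ * ‖q‖ ^ j ≤ ‖a * q‖ * 1 :=
        mul_le_mul_of_nonneg_left (pow_le_one₀ (norm_nonneg _) hq.le) (norm_nonneg _)
  _ = ‖a * q‖ := mul_one _

section Bounds

variable {q b : ℂ} {c r : ℝ}

lemma BE (hc0 : 0 < c) (hc : ∀ n, c ≤ ‖Qp q n‖) (hr : r < 1) (hbr : ‖b * q‖ ≤ r) :
    ‖Ef q b - 1‖ ≤ ‖b * q‖ * (1 - r)⁻¹ / c := by
  have hb : ‖b * q‖ < 1 := lt_of_le_of_lt hbr hr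
  have hr0 : 0 ≤ r := le_trans (norm_nonneg _) hbr
  have hshift : Ef q b - 1 = ∑' n : ℕ, (b * q) ^ (n + 1) / Qp q (n + 1) := by
    rw [Ef, Summable.tsum_eq_zero_add (sE hc0 hc hb)]
    simp [Qp]
  rw [hshift]
  refine tsum_of_norm_bounded
    (((hasSum_geometric_of_lt_one hr0 hr).mul_left ‖b * q‖).div_const c) fun n => ?_
  rw [norm_div, norm_pow, pow_succ']
  refine div_le_div₀ (by positivity) ?_ hc0 (hc (n + 1))
  exact mul_le_mul_of_nonneg_left (pow_le_pow_left₀ (norm_nonneg _) hbr n) (norm_nonneg _)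

lemma BG (hc0 : 0 < c) (hc : ∀ n, c ≤ ‖Qp q n‖) (hr : r < 1) (hbr : ‖b * q‖ ≤ r) :
    ‖Gf q b‖ ≤ ‖b * q‖ * (∑' n : ℕ, ((n : ℝ) + 1) * r ^ n) / c := by
  have hb : ‖b * q‖ < 1 := lt_of_le_of_lt hbr hr
  have hr0 : 0 ≤ r := le_trans (norm_nonneg _) hbr
  have hK : Summable (fun n : ℕ => ((n : ℝ) + 1) * r ^ n) := by
    have h1 := summable_pow_mul_geometric_of_norm_lt_one 1
      (show ‖r‖ < 1 by rwa [Real.norm_of_nonneg hr0])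
    have h2 := summable_geometric_of_lt_one hr0 hr
    exact (h1.add h2).congr fun n => by rw [pow_one]; ring
  have hshift : Gf q b = ∑' n : ℕ, (((n + 1) : ℕ) : ℂ) * (b * q) ^ (n + 1) / Qp q (n + 1) := by
    rw [Gf, Summable.tsum_eq_zero_add (sG hc0 hc hb)]
    simp
  rw [hshift]
  have hsum : HasSum (fun n : ℕ => ‖b * q‖ * (((n : ℝ) + 1) * r ^ n) / c)
      (‖b * q‖ * (∑' n : ℕ, ((n : ℝ) + 1) * r ^ n) / c) :=
    (hK.hasSum.mul_left ‖b * q‖).div_const c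
  refine tsum_of_norm_bounded hsum fun n => ?_
  have heq : ‖(((n + 1) : ℕ) : ℂ) * (b * q) ^ (n + 1) / Qp q (n + 1)‖
      = ((n : ℝ) + 1) * ‖b * q‖ ^ (n + 1) / ‖Qp q (n + 1)‖ := by
    rw [norm_div, norm_mul, norm_pow, Complex.norm_natCast]
    push_cast
    ring
  rw [heq]
  refine div_le_div₀ (by positivity) ?_ hc0 (hc (n + 1))
  calc ((n : ℝ) + 1) * ‖b * q‖ ^ (n + 1) = ‖b * q‖ * (((n : ℝ) + 1) * ‖b * q‖ ^ n) := by
        rw [pow_succ']; ring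
  _ ≤ ‖b * q‖ * (((n : ℝ) + 1) * r ^ n) := by
      refine mul_le_mul_of_nonneg_left ?_ (norm_nonneg _)
      exact mul_le_mul_of_nonneg_left (pow_le_pow_left₀ (norm_nonneg _) hbr n) (by positivity)

lemma BF (hq : ‖q‖ < 1) (hr : r < 1) (hbr : ‖b * q‖ ≤ r) :
    ‖Ff q b‖ ≤ ‖b * q‖ * (1 - ‖q‖)⁻¹ / (1 - r) := by
  have hr0 : 0 ≤ r := le_trans (norm_nonneg _) hbr
  rw [Ff]
  refine tsum_of_norm_bounded
    (((hasSum_geometric_of_lt_one (norm_nonneg q) hq).mul_left ‖b * q‖).div_const (1 - r))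
    fun n => ?_
  rw [norm_div, norm_aq]
  refine div_le_div₀ (by positivity) le_rfl (by linarith) ?_
  have h1 : ‖b * q ^ (n + 1)‖ ≤ r := le_trans (norm_aq_le b hq n) hbr
  have := norm_sub_norm_le (1 : ℂ) (b * q ^ (n + 1))
  simp only [norm_one] at this
  linarith

end Bounds

lemma multi {q a : ℂ} (hq : ‖q‖ < 1) (ha : ‖a * q‖ < 1) :
    Multipliable (fun j : ℕ => 1 - a * q ^ (j + 1)) := by
  have hne : ∀ j : ℕ, (1 : ℂ) - a * q ^ (j + 1) ≠ 0 := fun j =>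
    one_sub_ne (lt_of_le_of_lt (norm_aq_le a hq j) ha)
  have hlog : Summable (fun j : ℕ => Complex.log (1 - a * q ^ (j + 1))) := by
    refine Summable.of_norm_bounded_eventually_nat (g := fun j => 3 / 2 * (‖a * q‖ * ‖q‖ ^ j))
      (((summable_geometric_of_lt_one (norm_nonneg q) hq).mul_left _).mul_left _) ?_
    have hev : ∀ᶠ j : ℕ in atTop, ‖a * q‖ * ‖q‖ ^ j ≤ 1 / 2 := by
      have ht : Tendsto (fun j : ℕ => ‖a * q‖ * ‖q‖ ^ j) atTop (𝓝 (‖a * q‖ * 0)) :=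
        (tendsto_pow_atTop_nhds_zero_of_lt_one (norm_nonneg q) hq).const_mul _
      rw [mul_zero] at ht
      exact ht.eventually (eventually_le_nhds (by norm_num))
    filter_upwards [hev] with j hj
    have h1 : ‖-(a * q ^ (j + 1))‖ ≤ 1 / 2 := by
      rw [norm_neg]
      exact le_trans (le_of_eq (norm_aq a q j)) hj
    have h2 := Complex.norm_log_one_add_half_le_self h1
    rw [show (1 : ℂ) + -(a * q ^ (j + 1)) = 1 - a * q ^ (j + 1) by ring] at h2
    calc ‖Complex.log (1 - a * q ^ (j + 1))‖ ≤ 3 / 2 * ‖-(a * q ^ (j + 1))‖ := h2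
    _ = 3 / 2 * (‖a * q‖ * ‖q‖ ^ j) := by rw [norm_neg, norm_aq]
  exact Complex.multipliable_of_summable_log hlog

lemma iterA {q a : ℂ} (hq : ‖q‖ < 1) (ha : ‖a * q‖ < 1) (X : ℂ → ℂ)
    (hX : ∀ b, ‖b * q‖ < 1 → X (b * q) = X b * (1 - b * q)) (N : ℕ) :
    X (a * q ^ N) = X a * ∏ j ∈ Finset.range N, (1 - a * q ^ (j + 1)) := by
  induction N with
  | zero => simp
  | succ N ih =>
    have hb : ‖a * q ^ N * q‖ < 1 := by
      rw [show a * q ^ N * q = a * q ^ (N + 1) by ring]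
      exact lt_of_le_of_lt (norm_aq_le a hq N) ha
    have h2 := hX (a * q ^ N) hb
    rw [show a * q ^ (N + 1) = a * q ^ N * q by ring, h2, ih, Finset.prod_range_succ,
        show a * q ^ N * q = a * q ^ (N + 1) by ring]
    ring

theorem stmt_12 (a q : ℂ) (hq : ‖q‖ < 1)
    (ha : ‖a * q‖ < 1) :
    ∑' n : ℕ, a * q ^ (n + 1) / (1 - a * q ^ (n + 1))
      = (∏' j : ℕ, (1 - a * q ^ (j + 1)))
        * ∑' n : ℕ, (n + 1 : ℂ) * a ^ (n + 1) * q ^ (n + 1)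
            / ∏ j ∈ Finset.range (n + 1), (1 - q ^ (j + 1)) := by
  have hq' : ‖q‖ < 1 := by exact hq
  have ha' : ‖a * q‖ < 1 := by exact ha
  obtain ⟨c, hc0, hc⟩ := Qp_lb hq'
  set r := ‖a * q‖ with hrdef
  have hr : r < 1 := ha'
  have hr0 : 0 ≤ r := norm_nonneg _
  have haqN : ∀ N : ℕ, a * q ^ N * q = a * q ^ (N + 1) := fun N => by ring
  have hbrN : ∀ N : ℕ, ‖a * q ^ N * q‖ ≤ r := fun N => by
    rw [haqN N]; exact norm_aq_le a hq' N
  have hbN : ∀ N : ℕ, ‖a * q ^ N * q‖ < 1 := fun N => lt_of_le_of_lt (hbrN N) hr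
  have hnormN : ∀ N : ℕ, ‖a * q ^ N * q‖ = r * ‖q‖ ^ N := fun N => by
    rw [haqN N, norm_aq]
  have htq : Tendsto (fun N : ℕ => ‖q‖ ^ N) atTop (𝓝 0) :=
    tendsto_pow_atTop_nhds_zero_of_lt_one (norm_nonneg q) hq'
  -- limit of Ef along a*q^N
  have hE_lim : Tendsto (fun N : ℕ => Ef q (a * q ^ N)) atTop (𝓝 1) := by
    have h1 : Tendsto (fun N : ℕ => Ef q (a * q ^ N) - 1) atTop (𝓝 0) := by
      refine squeeze_zero_norm (a := fun N : ℕ => r * (1 - r)⁻¹ / c * ‖q‖ ^ N)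
        (fun N => ?_) (by simpa using htq.const_mul (r * (1 - r)⁻¹ / c))
      calc ‖Ef q (a * q ^ N) - 1‖ ≤ ‖a * q ^ N * q‖ * (1 - r)⁻¹ / c :=
            BE hc0 hc hr (hbrN N)
      _ = r * (1 - r)⁻¹ / c * ‖q‖ ^ N := by rw [hnormN]; ring
    have := h1.add_const 1
    simpa using this
  -- limit of Gf along a*q^N
  have hG_lim : Tendsto (fun N : ℕ => Gf q (a * q ^ N)) atTop (𝓝 0) := by
    set K := ∑' n : ℕ, ((n : ℝ) + 1) * r ^ n with hK
    refine squeeze_zero_norm (a := fun N : ℕ => r * K / c * ‖q‖ ^ N)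
      (fun N => ?_) (by simpa using htq.const_mul (r * K / c))
    calc ‖Gf q (a * q ^ N)‖ ≤ ‖a * q ^ N * q‖ * K / c := BG hc0 hc hr (hbrN N)
    _ = r * K / c * ‖q‖ ^ N := by rw [hnormN]; ring
  -- limit of Ff along a*q^N
  have hF_lim : Tendsto (fun N : ℕ => Ff q (a * q ^ N)) atTop (𝓝 0) := by
    refine squeeze_zero_norm (a := fun N : ℕ => r * (1 - ‖q‖)⁻¹ / (1 - r) * ‖q‖ ^ N)
      (fun N => ?_) (by simpa using htq.const_mul (r * (1 - ‖q‖)⁻¹ / (1 - r)))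
    calc ‖Ff q (a * q ^ N)‖ ≤ ‖a * q ^ N * q‖ * (1 - ‖q‖)⁻¹ / (1 - r) :=
          BF hq' hr (hbrN N)
    _ = r * (1 - ‖q‖)⁻¹ / (1 - r) * ‖q‖ ^ N := by rw [hnormN]; ring
  have hD_lim : Tendsto
      (fun N : ℕ => Ff q (a * q ^ N) * Ef q (a * q ^ N) - Gf q (a * q ^ N)) atTop (𝓝 0) := by
    have := (hF_lim.mul hE_lim).sub hG_lim
    simpa using this
  -- partial products converge to the infinite product
  have hP : Tendsto (fun N : ℕ => ∏ j ∈ Finset.range N, (1 - a * q ^ (j + 1))) atTop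
      (𝓝 (∏' j : ℕ, (1 - a * q ^ (j + 1)))) :=
    (multi hq' ha').hasProd.tendsto_prod_nat
  -- Euler identity: Ef q a * P = 1
  have iterE := iterA hq' ha' (Ef q) (fun b hb => FE_E hc0 hc hq' hb)
  have hEP : Ef q a * (∏' j : ℕ, (1 - a * q ^ (j + 1))) = 1 :=
    tendsto_nhds_unique ((hP.const_mul (Ef q a)).congr fun N => (iterE N).symm) hE_lim
  -- main identity: (Ff*Ef - Gf) * P = 0
  have hXD : ∀ b, ‖b * q‖ < 1 → Ff q (b * q) * Ef q (b * q) - Gf q (b * q)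
      = (Ff q b * Ef q b - Gf q b) * (1 - b * q) := by
    intro b hb
    have e := FE_E hc0 hc hq' hb
    have g := FE_G hc0 hc hq' hb
    have f := FE_F hq' hb
    have h1 : (1 : ℂ) - b * q ≠ 0 := one_sub_ne hb
    have f'' : Ff q b * (1 - b * q) = b * q + Ff q (b * q) * (1 - b * q) := by
      rw [f]
      field_simp
    linear_combination Ff q (b * q) * e - g - Ef q b * f''
  have iterD := iterA hq' ha' (fun b => Ff q b * Ef q b - Gf q b) hXD
  have hDP : (Ff q a * Ef q a - Gf q a) * (∏' j : ℕ, (1 - a * q ^ (j + 1))) = 0 :=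
    tendsto_nhds_unique
      ((hP.const_mul (Ff q a * Ef q a - Gf q a)).congr fun N => (iterD N).symm) hD_lim
  -- rewrite the statement in terms of Ff and Gf
  have hFa : (∑' n : ℕ, a * q ^ (n + 1) / (1 - a * q ^ (n + 1))) = Ff q a := rfl
  have hGa : (∑' n : ℕ, (n + 1 : ℂ) * a ^ (n + 1) * q ^ (n + 1)
      / ∏ j ∈ Finset.range (n + 1), (1 - q ^ (j + 1))) = Gf q a := by
    rw [Gf, Summable.tsum_eq_zero_add (sG hc0 hc ha')]
    simp only [Nat.cast_zero, zero_mul, zero_div, zero_add]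
    refine tsum_congr fun n => ?_
    rw [show Qp q (n + 1) = ∏ j ∈ Finset.range (n + 1), (1 - q ^ (j + 1)) from rfl]
    push_cast
    rw [mul_pow]
    ring
  rw [hFa, hGa]
  linear_combination hDP - Ff q a * hEP
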